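/- There exists a constant c ∈ ℕ such that for every integer k ≥ 1, the function f : {0,1}^k → ℂ defined by f(v) = (−1)^{v1·v2·⋯·vk} is exactly representable by an RBM with at most 2k + c hidden neurons. -/

import Mathlib

open Complex

/-- A function `f : {0,1}^n → ℂ` is exactly representable by a restricted Boltzmann machine
with `m` hidden neurons if there are complex parameters `a i`, `b j`, `W i j` and a nonzero
constant `C` with
`f v = C · exp(∑ i, a i v i) · ∏ j, (1 + exp(b j + ∑ i, W i j v i))` for all `v ∈ {0,1}^n`. -/
def RBMRepresentable (n m : ℕ) (f : (Fin n → Bool) → ℂ) : Prop :=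
  ∃ (C : ℂ) (a : Fin n → ℂ) (b : Fin m → ℂ) (W : Fin n → Fin m → ℂ),
    C ≠ 0 ∧ ∀ v : Fin n → Bool,
      f v = C * Complex.exp (∑ i, a i * (if v i then 1 else 0)) *
        ∏ j, (1 + Complex.exp (b j + ∑ i, W i j * (if v i then 1 else 0)))

open Polynomial

lemma list_prod_fin {α} [CommMonoid α] (l : List α) (f : α → α) :
    (l.map f).prod = ∏ j : Fin l.length, f (l.get j) := by
  rw [← List.prod_ofFn]
  congr 1
  conv_lhs => rw [← List.ofFn_get l, List.map_ofFn]
  rfl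

lemma poly_rbm (p : Polynomial ℂ) (hp0 : p.eval 0 ≠ 0) :
    ∃ m ≤ p.natDegree, ∃ (C : ℂ) (b : Fin m → ℂ), C ≠ 0 ∧
      ∀ z : ℂ, p.eval z = C * ∏ j, (1 + Complex.exp (b j) * z) := by
  have hp : p ≠ 0 := fun h => hp0 (by simp [h])
  have hsplit : p.Splits := IsAlgClosed.splits p
  have hfact := Polynomial.Splits.eq_prod_roots hsplit
  set l : List ℂ := p.roots.toList with hl
  have hcoe : (l : Multiset ℂ) = p.roots := Multiset.coe_toList _
  have hlen : l.length = Multiset.card p.roots := Multiset.length_toList _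
  have hrne : ∀ j : Fin l.length, l.get j ≠ 0 := by
    intro j hj0
    have hmem : l.get j ∈ p.roots := by
      rw [← hcoe]
      exact Multiset.mem_coe.mpr (List.get_mem l j)
    have := Polynomial.isRoot_of_mem_roots hmem
    rw [hj0] at this
    exact hp0 this
  refine ⟨l.length, by rw [hlen]; exact Polynomial.card_roots' p,
    p.leadingCoeff * ∏ j : Fin l.length, (-(l.get j)),
    fun j => Complex.log (-(l.get j)⁻¹), ?_, ?_⟩
  · refine mul_ne_zero (Polynomial.leadingCoeff_ne_zero.mpr hp) ?_
    exact Finset.prod_ne_zero_iff.mpr fun j _ => neg_ne_zero.mpr (hrne j)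
  · intro z
    have heval : p.eval z = p.leadingCoeff * ∏ j : Fin l.length, (z - l.get j) := by
      conv_lhs => rw [hfact]
      rw [Polynomial.eval_mul, Polynomial.eval_C, ← hcoe, Multiset.map_coe,
        Multiset.prod_coe, Polynomial.eval_list_prod, List.map_map]
      congr 1
      rw [show ((Polynomial.eval z) ∘ fun a => X - C a) = fun a : ℂ => z - a from by
        funext a; simp, list_prod_fin l (fun a => z - a)]
    have key : ∀ j : Fin l.length,
        z - l.get j = -(l.get j) * (1 + Complex.exp (Complex.log (-(l.get j)⁻¹)) * z) := by
      intro j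
      have hr := hrne j
      rw [Complex.exp_log (by simpa using inv_ne_zero hr)]
      simp only [List.get_eq_getElem] at hr ⊢
      field_simp
      ring
    rw [heval, Finset.prod_congr rfl (fun j _ => key j), Finset.prod_mul_distrib]
    ring

lemma exp_nat_ne {s t : ℕ} (h : s < t) :
    Complex.exp (s : ℂ) ≠ Complex.exp (t : ℂ) := by
  have hs : ((s : ℕ) : ℂ) = ((s : ℝ) : ℂ) := by push_cast; ring
  have ht : ((t : ℕ) : ℂ) = ((t : ℝ) : ℂ) := by push_cast; ring
  rw [hs, ht, ← Complex.ofReal_exp, ← Complex.ofReal_exp]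
  intro hc
  have := Complex.ofReal_injective hc
  have := Real.exp_lt_exp.mpr (show (s:ℝ) < t by exact_mod_cast h)
  linarith

/-- There is a constant `c` such that for every `k ≥ 1`, the `k`-hyperedge
correlation factor `f(v) = (−1)^{v1 v2 ⋯ vk}` is exactly representable by an RBM with at most
`2k + c` hidden neurons. -/
theorem hyperedge_factor_representable :
    ∃ c : ℕ, ∀ k : ℕ, 1 ≤ k → ∃ m ≤ 2 * k + c,
      RBMRepresentable k m
        (fun v => (-1 : ℂ) ^ (∏ i : Fin k, (if v i then 1 else 0 : ℕ))) := by
  refine ⟨1, fun k hk => ?_⟩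
  set es : ℕ → ℂ := fun s => Complex.exp (s : ℂ) with hes
  set q : Polynomial ℂ := X * ∏ s ∈ Finset.range k, (X - Polynomial.C (es s)) with hq
  set D : ℂ := q.eval (es k) with hD
  have hDne : D ≠ 0 := by
    rw [hD, hq]
    simp only [Polynomial.eval_mul, Polynomial.eval_X, Polynomial.eval_prod,
      Polynomial.eval_sub, Polynomial.eval_C]
    refine mul_ne_zero (Complex.exp_ne_zero _) ?_
    refine Finset.prod_ne_zero_iff.mpr fun s hs => ?_
    have := exp_nat_ne (Finset.mem_range.mp hs)
    exact sub_ne_zero.mpr (Ne.symm this)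
  set p : Polynomial ℂ := 1 - Polynomial.C (2 / D) * q with hp
  have hq0 : q.eval 0 = 0 := by simp [hq]
  have hp0 : p.eval 0 = 1 := by simp [hp, hq0]
  have hpnode : ∀ s < k, p.eval (es s) = 1 := by
    intro s hs
    have : q.eval (es s) = 0 := by
      rw [hq]
      simp only [Polynomial.eval_mul, Polynomial.eval_prod, Polynomial.eval_sub,
        Polynomial.eval_X, Polynomial.eval_C]
      refine mul_eq_zero_of_right _ ?_
      exact Finset.prod_eq_zero (Finset.mem_range.mpr hs) (by simp)
    simp [hp, this]
  have hptop : p.eval (es k) = -1 := by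
    rw [hp]
    simp only [Polynomial.eval_sub, Polynomial.eval_one, Polynomial.eval_mul,
      Polynomial.eval_C, ← hD]
    field_simp
    norm_num
  have hdeg : p.natDegree ≤ k + 1 := by
    have hqdeg : q.natDegree ≤ k + 1 := by
      refine le_trans (Polynomial.natDegree_mul_le) ?_
      have h1 : (X : Polynomial ℂ).natDegree = 1 := Polynomial.natDegree_X
      have h2 : (∏ s ∈ Finset.range k, (X - Polynomial.C (es s))).natDegree ≤ k := by
        refine le_trans (Polynomial.natDegree_prod_le _ _) ?_
        have hb : ∑ s ∈ Finset.range k, (X - Polynomial.C (es s)).natDegree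
            ≤ ∑ _s ∈ Finset.range k, 1 :=
          Finset.sum_le_sum fun s _ => Polynomial.natDegree_X_sub_C_le (es s)
        simpa using hb
      omega
    calc p.natDegree ≤ max (1 : Polynomial ℂ).natDegree (Polynomial.C (2/D) * q).natDegree :=
          Polynomial.natDegree_sub_le _ _
      _ ≤ k + 1 := by
          have := Polynomial.natDegree_C_mul_le (2/D) q
          simp only [Polynomial.natDegree_one]
          omega
  obtain ⟨m, hm, Cc, b, hCc, hrep⟩ := poly_rbm p (by rw [hp0]; exact one_ne_zero)
  refine ⟨m, by omega, Cc, 0, b, fun _ _ => 1, hCc, fun v => ?_⟩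
  set s : ℕ := ∑ i, (if v i then 1 else 0 : ℕ) with hsdef
  have hsum : ∀ j : Fin m, ∑ i, (1 : ℂ) * (if v i then 1 else 0) = (s : ℂ) := by
    intro j
    rw [hsdef]
    push_cast
    simp
  have hsle : s ≤ k := by
    rw [hsdef]
    calc ∑ i, (if v i then 1 else 0 : ℕ) ≤ ∑ _i : Fin k, 1 :=
        Finset.sum_le_sum fun i _ => by split <;> omega
      _ = k := by simp
  have hmain : (-1 : ℂ) ^ (∏ i : Fin k, (if v i then 1 else 0 : ℕ))
      = p.eval (Complex.exp (s : ℂ)) := by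
    by_cases hall : ∀ i, v i
    · have h1 : (∏ i : Fin k, (if v i then 1 else 0 : ℕ)) = 1 := by
        refine Finset.prod_eq_one fun i _ => by simp [hall i]
      have h2 : s = k := by
        rw [hsdef]
        calc ∑ i : Fin k, (if v i then 1 else 0 : ℕ) = ∑ _i : Fin k, 1 :=
            Finset.sum_congr rfl fun i _ => by simp [hall i]
          _ = k := by simp
      rw [h1, h2]
      simpa [hes] using hptop.symm
    · push_neg at hall
      obtain ⟨i0, hi0⟩ := hall
      have h1 : (∏ i : Fin k, (if v i then 1 else 0 : ℕ)) = 0 :=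
        Finset.prod_eq_zero (Finset.mem_univ i0) (by simp [hi0])
      have h2 : s < k := by
        have hlt : ∑ i, (if v i then 1 else 0 : ℕ) < ∑ _i : Fin k, 1 :=
          Finset.sum_lt_sum (fun i _ => by split <;> omega)
            ⟨i0, Finset.mem_univ i0, by simp [hi0]⟩
        have hone : (∑ _i : Fin k, 1) = k := by simp
        rw [hsdef]
        omega
      rw [h1]
      simpa [hes] using (hpnode s h2).symm
  simp only
  rw [hmain, hrep (Complex.exp (s : ℂ))]
  have : ∀ j : Fin m, (1 : ℂ) + Complex.exp (b j) * Complex.exp (s : ℂ)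
      = 1 + Complex.exp (b j + ∑ i, (1:ℂ) * (if v i then 1 else 0)) := by
    intro j
    rw [hsum j, Complex.exp_add]
  rw [Finset.prod_congr rfl fun j _ => this j]
  simp
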